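/- An optimal quantizer is stationary: if Γ* = {γ*_1,…,γ*_N} minimizes the distortion D(Γ) = E[min_{1≤i≤N}|X − γ_i|²] over all grids of size at most N, and each Voronoi cell of Γ* has positive probability, then E[X | q_N(X)] = q_N(X), where q_N(X) = ∑_i γ*_i 1_{C_i(Γ*)}(X) is the induced quantization. -/

import Mathlib

open MeasureTheory ProbabilityTheory

/-- An optimal quantizer is stationary: if the grid `Γ` minimizes the distortion
`D(Γ') = E[min_i |X − γ'_i|²]` over all grids of size at most `N`, `q` is the induced
nearest-neighbour quantization and every Voronoi cell has positive probability, then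
`E[X | q_N(X)] = q_N(X)`. -/
theorem stmt6 {Ω : Type*} [MeasurableSpace Ω] (μ : Measure Ω) [IsProbabilityMeasure μ]
    (X : Ω → ℝ) (hX : Measurable X) (hL2 : MemLp X 2 μ)
    (habs : Measure.map X μ ≪ volume)
    (N : ℕ) (hN : 0 < N) (Γ : Fin N → ℝ)
    (hopt : ∀ Γ' : Fin N → ℝ,
      ∫ ω, (⨅ i : Fin N, (X ω - Γ i) ^ 2) ∂μ ≤ ∫ ω, (⨅ i : Fin N, (X ω - Γ' i) ^ 2) ∂μ)
    (q : ℝ → ℝ) (hq : Measurable q)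
    (hproj : ∀ x, ∃ i : Fin N, q x = Γ i ∧ ∀ j : Fin N, |x - Γ i| ≤ |x - Γ j|)
    (hpos : ∀ i : Fin N, μ {ω | q (X ω) = Γ i} ≠ 0) :
    μ[X | MeasurableSpace.comap (fun ω => q (X ω)) Real.measurableSpace]
      =ᵐ[μ] fun ω => q (X ω) := by
  classical
  haveI : Nonempty (Fin N) := ⟨⟨0, hN⟩⟩
  set Y : Ω → ℝ := fun ω => q (X ω) with hYdef
  have hYmeas : Measurable Y := hq.comp hX
  -- pointwise identity for the infimum
  have hinf : ∀ ω, (⨅ i : Fin N, (X ω - Γ i) ^ 2) = (X ω - Y ω) ^ 2 := by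
    intro ω
    obtain ⟨i, hi, hle⟩ := hproj (X ω)
    have hYi : Y ω = Γ i := hi
    rw [hYi]
    refine le_antisymm (ciInf_le (Set.Finite.bddBelow (Set.finite_range _)) i)
      (le_ciInf fun j => ?_)
    calc (X ω - Γ i) ^ 2 = |X ω - Γ i| ^ 2 := (sq_abs _).symm
      _ ≤ |X ω - Γ j| ^ 2 := pow_le_pow_left₀ (abs_nonneg _) (hle j) 2
      _ = (X ω - Γ j) ^ 2 := sq_abs _
  -- integrabilities
  have hXint : Integrable X μ := hL2.integrable one_le_two
  have hYbd : ∃ C : ℝ, ∀ ω, ‖Y ω‖ ≤ C := by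
    refine ⟨Finset.univ.sup' Finset.univ_nonempty (fun i => |Γ i|), fun ω => ?_⟩
    obtain ⟨i, hi, -⟩ := hproj (X ω)
    have hYi : Y ω = Γ i := hi
    rw [hYi]
    exact Finset.le_sup' (fun i => |Γ i|) (Finset.mem_univ i)
  obtain ⟨C, hC⟩ := hYbd
  have hYL2 : MemLp Y 2 μ :=
    (memLp_top_of_bound hYmeas.aestronglyMeasurable C (ae_of_all _ hC)).mono_exponent
      le_top
  have hYint : Integrable Y μ := hYL2.integrable one_le_two
  have hgint : Integrable (fun ω => (X ω - Y ω) ^ 2) μ := (hL2.sub hYL2).integrable_sq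
  -- key : mean of X over each cell equals the codebook point
  have key : ∀ i : Fin N, ∫ ω in {ω | Y ω = Γ i}, (X ω - Γ i) ∂μ = 0 := by
    intro i
    set A : Set Ω := {ω | Y ω = Γ i} with hAdef
    have hA : MeasurableSet A := hYmeas (measurableSet_singleton (Γ i))
    have hXiint : Integrable (fun ω => X ω - Γ i) μ := hXint.sub (integrable_const _)
    have hsqint : ∀ t : ℝ, Integrable (fun ω => (X ω - t) ^ 2) μ := fun t =>
      (hL2.sub (memLp_const t)).integrable_sq
    -- step: for all t, ∫_A (X-Γi)² ≤ ∫_A (X-t)²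
    have step : ∀ t : ℝ, ∫ ω in A, (X ω - Γ i) ^ 2 ∂μ ≤ ∫ ω in A, (X ω - t) ^ 2 ∂μ := by
      intro t
      have h1 := hopt (Function.update Γ i t)
      set h : Ω → ℝ := fun ω =>
        A.indicator (fun ω => (X ω - t) ^ 2) ω + Aᶜ.indicator (fun ω => (X ω - Y ω) ^ 2) ω
        with hhdef
      have hhint : Integrable h μ :=
        ((hsqint t).indicator hA).add (hgint.indicator hA.compl)
      have hpt : ∀ ω, (⨅ j : Fin N, (X ω - Function.update Γ i t j) ^ 2) ≤ h ω := by
        intro ω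
        by_cases hω : ω ∈ A
        · have : (⨅ j : Fin N, (X ω - Function.update Γ i t j) ^ 2) ≤ (X ω - t) ^ 2 := by
            have := ciInf_le (f := fun j : Fin N => (X ω - Function.update Γ i t j) ^ 2)
              (Set.Finite.bddBelow (Set.finite_range _)) i
            simpa [Function.update_self] using this
          simp only [hhdef, Set.indicator_of_mem hω, Set.indicator_of_notMem
            (by simpa using hω : ω ∉ Aᶜ)]
          linarith
        · obtain ⟨j, hj, hle⟩ := hproj (X ω)
          have hYj : Y ω = Γ j := hj
          have hji : j ≠ i := by
            intro hji; exact hω (by simpa [hAdef, hji] using hYj)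
          have : (⨅ k : Fin N, (X ω - Function.update Γ i t k) ^ 2) ≤ (X ω - Y ω) ^ 2 := by
            have := ciInf_le (f := fun k : Fin N => (X ω - Function.update Γ i t k) ^ 2)
              (Set.Finite.bddBelow (Set.finite_range _)) j
            simpa [Function.update_of_ne hji, hYj] using this
          simp only [hhdef, Set.indicator_of_notMem hω, Set.indicator_of_mem
            (by simpa using hω : ω ∈ Aᶜ)]
          linarith
      have h2 : ∫ ω, (⨅ j : Fin N, (X ω - Function.update Γ i t j) ^ 2) ∂μ ≤ ∫ ω, h ω ∂μ :=
        integral_mono_of_nonneg (ae_of_all _ fun ω => le_ciInf fun j => sq_nonneg _)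
          hhint (ae_of_all _ hpt)
      have h3 : ∫ ω, h ω ∂μ
          = ∫ ω in A, (X ω - t) ^ 2 ∂μ + ∫ ω in Aᶜ, (X ω - Y ω) ^ 2 ∂μ := by
        rw [hhdef, integral_add ((hsqint t).indicator hA) (hgint.indicator hA.compl),
          integral_indicator hA, integral_indicator hA.compl]
      have h4 : ∫ ω, (⨅ j : Fin N, (X ω - Γ j) ^ 2) ∂μ
          = ∫ ω in A, (X ω - Γ i) ^ 2 ∂μ + ∫ ω in Aᶜ, (X ω - Y ω) ^ 2 ∂μ := by
        have e1 : ∫ ω, (⨅ j : Fin N, (X ω - Γ j) ^ 2) ∂μ = ∫ ω, (X ω - Y ω) ^ 2 ∂μ := by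
          congr 1; funext ω; exact hinf ω
        have e2 : ∫ ω in A, (X ω - Y ω) ^ 2 ∂μ = ∫ ω in A, (X ω - Γ i) ^ 2 ∂μ := by
          refine setIntegral_congr_fun hA fun ω hω => ?_
          simp only [hAdef, Set.mem_setOf_eq] at hω
          rw [hω]
        rw [e1, ← integral_add_compl hA hgint, e2]
      linarith [le_trans h1 h2, h3, h4]
    -- quadratic argument
    set m := ∫ ω in A, (X ω - Γ i) ∂μ with hm
    have hAfin : μ A ≠ ⊤ := measure_ne_top μ A
    set a := (μ A).toReal with ha
    have hapos : 0 < a := ENNReal.toReal_pos (hpos i) hAfin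
    have hquad : ∀ s : ℝ, 0 ≤ -2 * s * m + s ^ 2 * a := by
      intro s
      have h1 := step (Γ i + s)
      have h2 : ∫ ω in A, (X ω - (Γ i + s)) ^ 2 ∂μ
          = ∫ ω in A, (X ω - Γ i) ^ 2 ∂μ - 2 * s * m + s ^ 2 * a := by
        have e : ∀ ω, (X ω - (Γ i + s)) ^ 2
            = (X ω - Γ i) ^ 2 - 2 * s * (X ω - Γ i) + s ^ 2 := by intro ω; ring
        calc ∫ ω in A, (X ω - (Γ i + s)) ^ 2 ∂μ
            = ∫ ω in A, ((X ω - Γ i) ^ 2 - 2 * s * (X ω - Γ i) + s ^ 2) ∂μ := by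
              congr 1; funext ω; exact e ω
          _ = ∫ ω in A, ((X ω - Γ i) ^ 2 - 2 * s * (X ω - Γ i)) ∂μ
              + ∫ ω in A, (s ^ 2 : ℝ) ∂μ := by
              have hfint : IntegrableOn (fun ω => (X ω - Γ i) ^ 2 - 2 * s * (X ω - Γ i)) A μ :=
                ((hsqint (Γ i)).integrableOn).sub ((hXiint.const_mul (2 * s)).integrableOn)
              exact integral_add hfint (integrable_const _)
          _ = ∫ ω in A, (X ω - Γ i) ^ 2 ∂μ - 2 * s * m + s ^ 2 * a := by
              rw [integral_sub ((hsqint (Γ i)).integrableOn)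
                ((hXiint.const_mul (2 * s)).integrableOn), integral_const_mul,
                setIntegral_const, smul_eq_mul]
              rw [← hm, measureReal_def, ← ha]; ring
      rw [h2] at h1
      linarith
    have h0 := hquad (m / a)
    have hmsq : m ^ 2 ≤ 0 := by
      have h1 : -2 * (m / a) * m + (m / a) ^ 2 * a = -(m ^ 2) / a := by
        field_simp; ring
      rw [h1] at h0
      have h2 : (0 : ℝ) * a ≤ -(m ^ 2) := (le_div_iff₀ hapos).mp h0
      linarith
    have : m = 0 := by nlinarith [sq_nonneg m]
    exact this
  -- cell-wise integrals of X - Y vanish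
  have keyY : ∀ i : Fin N, ∫ ω in {ω | Y ω = Γ i}, (X ω - Y ω) ∂μ = 0 := by
    intro i
    have hA : MeasurableSet {ω | Y ω = Γ i} := hYmeas (measurableSet_singleton (Γ i))
    have : ∫ ω in {ω | Y ω = Γ i}, (X ω - Y ω) ∂μ
        = ∫ ω in {ω | Y ω = Γ i}, (X ω - Γ i) ∂μ := by
      refine setIntegral_congr_fun hA fun ω hω => ?_
      simp only [Set.mem_setOf_eq] at hω
      rw [hω]
    rw [this, key i]
  -- set integral equality over the comap σ-algebra
  have hm : MeasurableSpace.comap Y Real.measurableSpace ≤ ‹MeasurableSpace Ω› :=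
    measurable_iff_comap_le.mp hYmeas
  haveI : SigmaFinite (μ.trim hm) := by
    haveI := isFiniteMeasure_trim hm (μ := μ)
    infer_instance
  have hφint : Integrable (fun ω => X ω - Y ω) μ := hXint.sub hYint
  have heq : ∀ s : Set Ω, MeasurableSet[MeasurableSpace.comap Y Real.measurableSpace] s →
      μ s < ⊤ → ∫ ω in s, Y ω ∂μ = ∫ ω in s, X ω ∂μ := by
    rintro s ⟨B, hB, rfl⟩ -
    have hmeasB : MeasurableSet (Y ⁻¹' B) := hYmeas hB
    set T : Finset ℝ := (Finset.image Γ Finset.univ).filter (· ∈ B) with hT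
    have hcover : Y ⁻¹' B = ⋃ v ∈ T, Y ⁻¹' {v} := by
      ext ω
      simp only [Set.mem_preimage, Set.mem_iUnion, Set.mem_singleton_iff, hT,
        Finset.mem_filter, Finset.mem_image, Finset.mem_univ, true_and]
      constructor
      · intro hω
        obtain ⟨i, hi, -⟩ := hproj (X ω)
        exact ⟨Y ω, ⟨⟨i, hi.symm⟩, hω⟩, rfl⟩
      · rintro ⟨v, ⟨-, hvB⟩, rfl⟩
        exact hvB
    have hdisj : (↑T : Set ℝ).Pairwise (Function.onFun Disjoint fun v => Y ⁻¹' {v}) := by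
      intro v _ w _ hvw
      refine Set.disjoint_left.mpr fun ω h1 h2 => hvw ?_
      simp only [Set.mem_preimage, Set.mem_singleton_iff] at h1 h2
      rw [← h1, ← h2]
    have hzero : ∫ ω in Y ⁻¹' B, (X ω - Y ω) ∂μ = 0 := by
      rw [hcover, integral_biUnion_finset T
        (fun v _ => hYmeas (measurableSet_singleton v)) hdisj
        (fun v _ => hφint.integrableOn)]
      refine Finset.sum_eq_zero fun v hv => ?_
      simp only [hT, Finset.mem_filter, Finset.mem_image, Finset.mem_univ, true_and] at hv
      obtain ⟨⟨i, rfl⟩, -⟩ := hv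
      exact keyY i
    have hsub : ∫ ω in Y ⁻¹' B, (X ω - Y ω) ∂μ
        = ∫ ω in Y ⁻¹' B, X ω ∂μ - ∫ ω in Y ⁻¹' B, Y ω ∂μ :=
      integral_sub hXint.integrableOn hYint.integrableOn
    rw [hsub] at hzero
    linarith
  have hYsm : AEStronglyMeasurable[MeasurableSpace.comap Y Real.measurableSpace] Y μ :=
    ⟨Y, (@measurable_iff_comap_le Ω ℝ (MeasurableSpace.comap Y Real.measurableSpace)
      Real.measurableSpace Y).mpr le_rfl |>.stronglyMeasurable, Filter.EventuallyEq.rfl⟩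
  exact (ae_eq_condExp_of_forall_setIntegral_eq hm hXint
    (fun s _ _ => hYint.integrableOn) heq hYsm).symm
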